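/- Let (G',H') = altan(G,H) with |H| = h even, and let q be a kernel eigenvector of G' vanishing on all vertices of G and on all perimeter vertices x_1,...,x_h. Then q(y_i) = q(y_1) for all odd i and q(y_i) = -q(y_1) for all even i; in particular q is a scalar multiple of the special vector. -/

import Mathlib

open scoped Classical

/-- The nullity of a graph: dimension of the kernel of its real adjacency matrix. -/
noncomputable def nullity {V : Type*} [Fintype V] (G : SimpleGraph V) : ℕ :=
  letI := Classical.decEq V
  letI := Classical.decRel G.Adj
  Module.finrank ℝ ↥(LinearMap.ker (Matrix.toLin' (G.adjMatrix ℝ)))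

/-- `q` is a kernel eigenvector of `G`: the sum of `q` over each neighbourhood is `0`. -/
def IsKernelVector {V : Type*} [Fintype V] (G : SimpleGraph V) (q : V → ℝ) : Prop :=
  ∀ v : V, ∑ u : V, (if G.Adj v u then q u else 0) = 0

/-- Underlying relation of the altan construction: vertices are `V ⊕ (Fin h ⊕ Fin h)`,
where `Sum.inr (Sum.inl i)` is `x_{i+1}` and `Sum.inr (Sum.inr i)` is `y_{i+1}`
(0-indexed versions of the 1-indexed `x_i, y_i`). -/
def altanRel {V : Type*} {h : ℕ} [NeZero h] (G : SimpleGraph V) (H : Fin h → V) :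
    (V ⊕ (Fin h ⊕ Fin h)) → (V ⊕ (Fin h ⊕ Fin h)) → Prop
  | Sum.inl u, Sum.inl w => G.Adj u w
  | Sum.inl u, Sum.inr (Sum.inl i) => u = H i
  | Sum.inr (Sum.inl i), Sum.inr (Sum.inr j) => j = i ∨ i = j + 1
  | _, _ => False

/-- The altan of `(G, H)`. -/
def altan {V : Type*} {h : ℕ} [NeZero h] (G : SimpleGraph V) (H : Fin h → V) :
    SimpleGraph (V ⊕ (Fin h ⊕ Fin h)) :=
  SimpleGraph.fromRel (altanRel G H)

/-- The special vector: `s(y_i) = (-1)^i` (1-indexed), `0` elsewhere. -/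
def specialVector (V : Type*) (h : ℕ) : (V ⊕ (Fin h ⊕ Fin h)) → ℝ
  | Sum.inr (Sum.inr j) => (-1 : ℝ) ^ ((j : ℕ) + 1)
  | _ => 0

/-- The induced attachment set `H' = (y_1, ..., y_h)` of the altan. -/
def inducedAttachment (V : Type*) (h : ℕ) : Fin h → (V ⊕ (Fin h ⊕ Fin h)) :=
  fun i => Sum.inr (Sum.inr i)

/-- for even attachment size, a kernel eigenvector of the altan vanishing on
`V(G)` and all `x_i` alternates in sign on the `y_i`, hence is a scalar multiple of the
special vector. -/
theorem stmt8 {V : Type*} [Fintype V] {h : ℕ} [NeZero h] (hh : 2 ≤ h) (heven : Even h)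
    (G : SimpleGraph V) (H : Fin h → V) (q : (V ⊕ (Fin h ⊕ Fin h)) → ℝ)
    (hq : IsKernelVector (altan G H) q)
    (hV : ∀ u : V, q (Sum.inl u) = 0)
    (hx : ∀ i : Fin h, q (Sum.inr (Sum.inl i)) = 0) :
    (∀ i : Fin h, q (Sum.inr (Sum.inr i)) = (-1 : ℝ) ^ (i : ℕ) * q (Sum.inr (Sum.inr 0))) ∧
      ∃ c : ℝ, ∀ v, q v = c * specialVector V h v := by

  obtain ⟨m, rfl⟩ : ∃ m, h = m + 2 := ⟨h - 2, by omega⟩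
  set Y : Fin (m+2) → (V ⊕ (Fin (m+2) ⊕ Fin (m+2))) := fun j => Sum.inr (Sum.inr j) with hY
  have hadj : ∀ i j : Fin (m+2),
      (altan G H).Adj (Sum.inr (Sum.inl i)) (Sum.inr (Sum.inr j)) ↔ (j = i ∨ j = i - 1) := by
    intro i j
    have h2 : (j = i ∨ i = j + 1) ↔ (j = i ∨ j = i - 1) :=
      or_congr Iff.rfl (by rw [eq_sub_iff_add_eq]; exact eq_comm)
    rw [← h2]
    simp only [altan, SimpleGraph.fromRel_adj]
    constructor
    · rintro ⟨-, h | h⟩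
      · exact h
      · exact h.elim
    · intro h
      exact ⟨by simp, Or.inl h⟩
  have hne : ∀ i : Fin (m+2), i ≠ i - 1 := by
    intro i e
    have : (1 : Fin (m+2)) = 0 := sub_eq_self.mp e.symm
    exact one_ne_zero this
  have key : ∀ i : Fin (m+2), q (Y i) + q (Y (i-1)) = 0 := by
    intro i
    have hk := hq (Sum.inr (Sum.inl i))
    rw [Fintype.sum_sum_type, Fintype.sum_sum_type] at hk
    simp only [hV, hx, ite_self, Finset.sum_const_zero, zero_add, add_zero] at hk
    simp only [hadj] at hk
    have split : ∀ j : Fin (m+2),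
        (if (j = i ∨ j = i-1) then q (Sum.inr (Sum.inr j)) else 0)
          = (if j = i then q (Sum.inr (Sum.inr j)) else 0)
            + (if j = i - 1 then q (Sum.inr (Sum.inr j)) else 0) := by
      intro j
      have := hne i
      by_cases h1 : j = i <;> by_cases h2 : j = i - 1 <;> simp_all
    rw [Finset.sum_congr rfl (fun j _ => split j), Finset.sum_add_distrib] at hk
    simp only [Finset.sum_ite_eq', Finset.mem_univ, if_true] at hk
    exact hk
  have main : ∀ n, ∀ i : Fin (m+2), (i:ℕ) = n → q (Y i) = (-1:ℝ)^n * q (Y 0) := by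
    intro n
    induction n with
    | zero =>
      intro i hi
      have : i = 0 := Fin.ext (by simp [hi])
      subst this; simp
    | succ n ih =>
      intro i hi
      have hn2 : n + 1 < m + 2 := hi ▸ i.isLt
      set j : Fin (m+2) := ⟨n, by omega⟩ with hj
      have hij : i = j + 1 := by
        apply Fin.ext
        simp [Fin.add_def, hi, hj, Nat.mod_eq_of_lt hn2]
      have hji : i - 1 = j := by rw [hij]; exact add_sub_cancel_right j 1
      have hk := key i
      rw [hji] at hk
      have hqi : q (Y i) = - q (Y j) := by linarith
      rw [hqi, ih j rfl]; ring
  have alt : ∀ i : Fin (m+2), q (Y i) = (-1:ℝ)^(i:ℕ) * q (Y 0) := fun i => main i i rfl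
  constructor
  · exact alt
  · refine ⟨-q (Y 0), ?_⟩
    rintro (u | i | j)
    · simp [specialVector, hV]
    · simp [specialVector, hx]
    · show q (Y j) = _
      rw [alt j]
      simp only [specialVector, pow_succ]
      ring
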